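/- (ε-dominance of the CEILING strategy.) Fix an agent n ∈ {1,…,N}, a true utility u_n : ℕ → ℝ, a bid b_n : ℕ → ℝ, an ε ≥ 0 with 0 ≤ b_n(m) − u_n(m) ≤ ε for all m ∈ ℕ, and bid functions b_j : ℕ → ℝ for every agent j ≠ n. Let r_n : ℕ → ℝ be any alternative bid, let (y, p) be any VCG outcome for agent n under the profile in which agent n bids b_n and each j ≠ n bids b_j, and let (y', p') be any VCG outcome for agent n under the profile in which agent n bids r_n and each j ≠ n bids b_j. Then (u_n(y'_n) − p') − (u_n(y_n) − p) ≤ ε. -/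

import Mathlib

open Finset

/-- A VCG outcome `(y, p)` for agent `n` given a finite nonempty set `Y ⊆ ℕ^N` of feasible
allocations and bid functions `b j : ℕ → ℝ`: `y ∈ Y` maximizes `∑_j b_j(z_j)` over `z ∈ Y`,
and `p = max_{z∈Y} ∑_{j≠n} b_j(z_j) − ∑_{j≠n} b_j(y_j)`. -/
def VCGOutcome {N : ℕ} (Y : Finset (Fin N → ℕ)) (hY : Y.Nonempty)
    (b : Fin N → ℕ → ℝ) (n : Fin N) (y : Fin N → ℕ) (p : ℝ) : Prop :=
  y ∈ Y ∧
  (∀ z ∈ Y, ∑ j, b j (z j) ≤ ∑ j, b j (y j)) ∧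
  p = Y.sup' hY (fun z => ∑ j ∈ univ.erase n, b j (z j)) - ∑ j ∈ univ.erase n, b j (y j)

/-- ε-dominance of the CEILING strategy. If agent `n`'s bid `bn` satisfies
`0 ≤ bn(m) − u_n(m) ≤ ε` for all `m`, then any unilateral deviation gains at most `ε`. -/
theorem quantizedVCG_statement_15 (N : ℕ) (hN : 1 ≤ N)
    (Y : Finset (Fin N → ℕ)) (hY : Y.Nonempty)
    (n : Fin N) (u : ℕ → ℝ) (bn : ℕ → ℝ) (ε : ℝ) (hε : 0 ≤ ε)
    (hceil : ∀ m : ℕ, 0 ≤ bn m - u m ∧ bn m - u m ≤ ε)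
    (b : Fin N → ℕ → ℝ) (r : ℕ → ℝ)
    (y : Fin N → ℕ) (p : ℝ) (y' : Fin N → ℕ) (p' : ℝ)
    (hbid : VCGOutcome Y hY (Function.update b n bn) n y p)
    (halt : VCGOutcome Y hY (Function.update b n r) n y' p') :
    (u (y' n) - p') - (u (y n) - p) ≤ ε := by
  obtain ⟨hy, hmax, hp⟩ := hbid
  obtain ⟨hy', hmax', hp'⟩ := halt
  have hupd : ∀ (f : ℕ → ℝ) (z : Fin N → ℕ),
      ∑ j ∈ univ.erase n, Function.update b n f j (z j)
        = ∑ j ∈ univ.erase n, b j (z j) := by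
    intro f z
    refine Finset.sum_congr rfl fun j hj => ?_
    rw [Function.update_of_ne (Finset.ne_of_mem_erase hj)]
  have hsum : ∀ (f : ℕ → ℝ) (z : Fin N → ℕ),
      ∑ j, Function.update b n f j (z j)
        = f (z n) + ∑ j ∈ univ.erase n, b j (z j) := by
    intro f z
    rw [← Finset.add_sum_erase _ _ (Finset.mem_univ n), hupd f z,
      Function.update_self]
  simp only [hupd] at hp hp'
  have hkey := hmax y' hy'
  rw [hsum bn y, hsum bn y'] at hkey
  have h1 := (hceil (y n)).2
  have h2 := (hceil (y' n)).1
  rw [hp, hp']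
  linarith
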